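/- Let p, q be coprime positive integers and let R, ρ be positive real numbers satisfying R^p = ρ^q and R² + ρ² = 1. Then the set {(u, v) ∈ ℂ² : |u|² + |v|² = 1 and u^p − v^q = 0} equals the set {(R·e^{iqt}, ρ·e^{ipt}) : t ∈ ℝ}, i.e. the zero set of Brauner's map on the unit 3-sphere is exactly the image of the (p,q) torus-knot curve. -/

import Mathlib

open Complex

private lemma abs_unique (p q : ℕ) (hp : 0 < p) (hq : 0 < q) (x y R ρ : ℝ)
    (hx : 0 ≤ x) (hy : 0 ≤ y) (hR : 0 < R) (hρ : 0 < ρ)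
    (h1 : x ^ p = y ^ q) (h2 : R ^ p = ρ ^ q)
    (h3 : x ^ 2 + y ^ 2 = 1) (h4 : R ^ 2 + ρ ^ 2 = 1) : x = R ∧ y = ρ := by
  have key : x = R := by
    rcases lt_trichotomy x R with h | h | h
    · exfalso
      have hyρ : ρ < y := by
        by_contra hc
        push_neg at hc
        have := pow_le_pow_left₀ hy hc 2
        have := pow_lt_pow_left₀ h hx (by omega : (2:ℕ) ≠ 0)
        nlinarith
      have e1 : x ^ p < R ^ p := pow_lt_pow_left₀ h hx (by omega)
      have e2 : ρ ^ q < y ^ q := pow_lt_pow_left₀ hyρ hρ.le (by omega)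
      nlinarith
    · exact h
    · exfalso
      have hyρ : y < ρ := by
        by_contra hc
        push_neg at hc
        have := pow_le_pow_left₀ hρ.le hc 2
        have := pow_lt_pow_left₀ h hR.le (by omega : (2:ℕ) ≠ 0)
        nlinarith
      have e1 : R ^ p < x ^ p := pow_lt_pow_left₀ h hR.le (by omega)
      have e2 : y ^ q < ρ ^ q := pow_lt_pow_left₀ hyρ hy (by omega)
      nlinarith
  refine ⟨key, ?_⟩
  have : y ^ 2 = ρ ^ 2 := by nlinarith
  nlinarith

private lemma pow_mul_exp (c : ℂ) (θ : ℝ) (n : ℕ) :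
    (c * Complex.exp ((θ : ℂ) * I)) ^ n = c ^ n * Complex.exp (((n * θ : ℝ) : ℂ) * I) := by
  rw [mul_pow, ← Complex.exp_nat_mul]
  push_cast
  ring_nf

/-- The zero set of Brauner's map `f(u,v) = u^p − v^q` on the unit 3-sphere is exactly the
`(p,q)` torus knot curve `t ↦ (R·e^{iqt}, ρ·e^{ipt})`, where `R^p = ρ^q` and `R² + ρ² = 1`. -/
theorem brauner_zero_set_is_torus_knot (p q : ℕ) (hp : 0 < p) (hq : 0 < q)
    (hpq : Nat.Coprime p q) (R ρ : ℝ) (hR : 0 < R) (hρ : 0 < ρ)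
    (hRρ : R ^ p = ρ ^ q) (hsph : R ^ 2 + ρ ^ 2 = 1) :
    {z : ℂ × ℂ | ‖z.1‖ ^ 2 + ‖z.2‖ ^ 2 = 1 ∧ z.1 ^ p - z.2 ^ q = 0} =
      {z : ℂ × ℂ | ∃ t : ℝ,
        z = ((R : ℂ) * Complex.exp (Complex.I * (q * t)),
             (ρ : ℂ) * Complex.exp (Complex.I * (p * t)))} := by
  ext ⟨u, v⟩
  simp only [Set.mem_setOf_eq, Prod.mk.injEq]
  constructor
  · rintro ⟨hsphere, hzero⟩
    have habs : u ^ p = v ^ q := sub_eq_zero.mp hzero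
    have habs' : ‖u‖ ^ p = ‖v‖ ^ q := by
      rw [← norm_pow, ← norm_pow, habs]
    obtain ⟨hxu, hyv⟩ := abs_unique p q hp hq (‖u‖) (‖v‖) R ρ
      (norm_nonneg u) (norm_nonneg v) hR hρ habs' hRρ hsphere hsph
    set α := u.arg with hα
    set β := v.arg with hβ
    have hu : u = (R : ℂ) * Complex.exp ((α : ℂ) * I) := by
      rw [← hxu]; exact (Complex.norm_mul_exp_arg_mul_I u).symm
    have hv : v = (ρ : ℂ) * Complex.exp ((β : ℂ) * I) := by
      rw [← hyv]; exact (Complex.norm_mul_exp_arg_mul_I v).symm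
    have hRc : ((R:ℂ) ^ p) = ((ρ:ℂ) ^ q) := by exact_mod_cast hRρ
    have hne : ((R:ℂ) ^ p) ≠ 0 := by
      simp only [ne_eq, pow_eq_zero_iff hp.ne']
      exact_mod_cast hR.ne'
    have hexp : Complex.exp (((p * α : ℝ) : ℂ) * I) = Complex.exp (((q * β : ℝ) : ℂ) * I) := by
      have h1 : ((R:ℂ) ^ p) * Complex.exp (((p * α : ℝ):ℂ) * I)
          = ((R:ℂ) ^ p) * Complex.exp (((q * β : ℝ):ℂ) * I) := by
        calc ((R:ℂ) ^ p) * Complex.exp (((p * α : ℝ):ℂ) * I)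
            = ((R:ℂ) * Complex.exp ((α:ℂ) * I)) ^ p := (pow_mul_exp _ _ _).symm
          _ = u ^ p := by rw [← hu]
          _ = v ^ q := habs
          _ = ((ρ:ℂ) * Complex.exp ((β:ℂ) * I)) ^ q := by rw [← hv]
          _ = ((ρ:ℂ) ^ q) * Complex.exp (((q * β : ℝ):ℂ) * I) := pow_mul_exp _ _ _
          _ = ((R:ℂ) ^ p) * Complex.exp (((q * β : ℝ):ℂ) * I) := by rw [hRc]
      exact mul_left_cancel₀ hne h1
    rw [Complex.exp_eq_exp_iff_exists_int] at hexp
    obtain ⟨n, hn⟩ := hexp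
    have hreal : (p : ℝ) * α = q * β + n * (2 * Real.pi) := by
      have := congrArg Complex.im hn
      simpa using this
    obtain ⟨a, b, hab⟩ : ∃ a b : ℤ, a * p + b * q = 1 := by
      have hg : Int.gcd (p : ℤ) (q : ℤ) = 1 := by
        rw [Int.gcd_natCast_natCast]; exact hpq
      exact Int.isCoprime_iff_gcd_eq_one.mpr hg
    set m : ℤ := -(n * a) with hm
    set n₂ : ℤ := n * b with hn₂
    have hab' : (a : ℝ) * p + b * q = 1 := by exact_mod_cast hab
    have hkey : (n : ℝ) + p * m = q * n₂ := by
      simp only [hm, hn₂]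
      push_cast
      linear_combination (-(n : ℝ)) * hab'
    have hq' : (q : ℝ) ≠ 0 := by positivity
    set t : ℝ := (α + 2 * Real.pi * m) / q with ht
    have hqt : (q : ℝ) * t = α + 2 * Real.pi * m := by
      rw [ht]; field_simp
    have hpt : (p : ℝ) * t = β + 2 * Real.pi * n₂ := by
      have h5 : (q : ℝ) * ((p : ℝ) * t) = q * (β + 2 * Real.pi * n₂) := by
        calc (q : ℝ) * ((p : ℝ) * t) = p * ((q : ℝ) * t) := by ring
          _ = p * (α + 2 * Real.pi * m) := by rw [hqt]
          _ = q * (β + 2 * Real.pi * n₂) := by linear_combination hreal + 2 * Real.pi * hkey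
      exact mul_left_cancel₀ hq' h5
    have hqtC : (q : ℂ) * (t : ℂ) = (α : ℂ) + 2 * (Real.pi : ℂ) * (m : ℂ) := by
      have := congrArg (Complex.ofReal) hqt
      push_cast at this
      exact this
    have hptC : (p : ℂ) * (t : ℂ) = (β : ℂ) + 2 * (Real.pi : ℂ) * (n₂ : ℂ) := by
      have := congrArg (Complex.ofReal) hpt
      push_cast at this
      exact this
    refine ⟨t, ?_, ?_⟩
    · rw [hu]
      congr 1
      rw [Complex.exp_eq_exp_iff_exists_int]
      refine ⟨-m, ?_⟩
      push_cast
      linear_combination (-I) * hqtC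
    · rw [hv]
      congr 1
      rw [Complex.exp_eq_exp_iff_exists_int]
      refine ⟨-n₂, ?_⟩
      push_cast
      linear_combination (-I) * hptC
  · rintro ⟨t, hu, hv⟩
    subst hu hv
    have habs1 : ‖Complex.exp (I * (q * t))‖ = 1 := by
      rw [Complex.norm_exp]; simp
    have habs2 : ‖Complex.exp (I * (p * t))‖ = 1 := by
      rw [Complex.norm_exp]; simp
    constructor
    · simp only [norm_mul, habs1, habs2, mul_one, Complex.norm_real, Real.norm_eq_abs,
        abs_of_pos hR, abs_of_pos hρ]
      exact hsph
    · rw [mul_pow, mul_pow, ← Complex.exp_nat_mul, ← Complex.exp_nat_mul]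
      have h2 : (p : ℂ) * (I * (q * t)) = (q : ℂ) * (I * (p * t)) := by ring
      rw [h2, sub_eq_zero]
      congr 1
      exact_mod_cast hRρ
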